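/- arXiv:math/0404318 — 2 statements merged into one kernel-verified Lean document; each statement's English description precedes it below -/
import Mathlib

section
/- Assume θ·ℵ₀ < κ (cardinal product) and |P_θ(μ)| < κ for every cardinal μ < κ. Then P_κ(λ) ∉ ∇^{[λ]^{<θ}} I_{κ,λ}. -/
open Cardinal Set

namespace PklNormal

/-- `P_κ(l)`: the collection of subsets of (the set of ordinals below) `l`
of cardinality `< κ`. -/
def PSet (κ : Cardinal.{0}) (l : Ordinal.{0}) : Set (Set Ordinal.{0}) :=
  {a | a ⊆ Set.Iio l ∧ #↥a < Cardinal.lift.{1} κ}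

/-- `e ∈ P_{|a ∩ σ|}(a ∩ γ)`. -/
def inP (σ : Cardinal.{0}) (γ : Ordinal.{0}) (a e : Set Ordinal.{0}) : Prop :=
  e ⊆ a ∩ Set.Iio γ ∧ #↥e < #↥(a ∩ Set.Iio σ.ord)

/-- The collection `I_{κ,l}` of non-cofinal subsets of `P_κ(l)`. -/
def Ikl (κ : Cardinal.{0}) (l : Ordinal.{0}) : Set (Set (Set Ordinal.{0})) :=
  {B | B ⊆ PSet κ l ∧ ∃ a ∈ PSet κ l, ∀ b ∈ B, ¬ a ⊆ b}

/-- An ideal on `P_κ(l)`. -/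
structure IsIdeal (κ : Cardinal.{0}) (l : Ordinal.{0})
    (K : Set (Set (Set Ordinal.{0}))) : Prop where
  mem_subset : ∀ B ∈ K, B ⊆ PSet κ l
  subset_mem : ∀ B ∈ K, ∀ C ⊆ B, C ∈ K
  sUnion_mem : ∀ Y ⊆ K, Y.Nonempty → #↥Y < Cardinal.lift.{1} κ → ⋃₀ Y ∈ K
  nonCofinal_subset : Ikl κ l ⊆ K
  univ_not_mem : PSet κ l ∉ K

/-- `K⁺`: the subsets of `P_κ(l)` not in `K`. -/
def plus (κ : Cardinal.{0}) (l : Ordinal.{0}) (K : Set (Set (Set Ordinal.{0}))) :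
    Set (Set (Set Ordinal.{0})) :=
  {B | B ⊆ PSet κ l ∧ B ∉ K}

/-- `K*`: the subsets of `P_κ(l)` whose complement is in `K`. -/
def star (κ : Cardinal.{0}) (l : Ordinal.{0}) (K : Set (Set (Set Ordinal.{0}))) :
    Set (Set (Set Ordinal.{0})) :=
  {B | B ⊆ PSet κ l ∧ PSet κ l \ B ∈ K}

/-- `K|A`. -/
def restrict (κ : Cardinal.{0}) (l : Ordinal.{0}) (K : Set (Set (Set Ordinal.{0})))
    (A : Set (Set Ordinal.{0})) : Set (Set (Set Ordinal.{0})) :=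
  {B | B ⊆ PSet κ l ∧ B ∩ A ∈ K}

/-- `∇^{[γ]^{<σ}} J`. -/
def nabla (κ : Cardinal.{0}) (l : Ordinal.{0}) (σ : Cardinal.{0}) (γ : Ordinal.{0})
    (J : Set (Set (Set Ordinal.{0}))) : Set (Set (Set Ordinal.{0})) :=
  {B | ∃ F : Set Ordinal.{0} → Set (Set Ordinal.{0}),
    (∀ e ∈ PSet σ γ, F e ∈ J) ∧
    B ⊆ {a | a ∈ PSet κ l ∧ a ∩ Set.Iio σ.ord = ∅} ∪
      ⋃ e ∈ PSet σ γ, {a | a ∈ F e ∧ inP σ γ a e}}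

/-- `J` is `[γ]^{<σ}`-normal. -/
def IsNormal (κ : Cardinal.{0}) (l : Ordinal.{0}) (σ : Cardinal.{0}) (γ : Ordinal.{0})
    (J : Set (Set (Set Ordinal.{0}))) : Prop :=
  J = nabla κ l σ γ J

def IsNormalIdeal (κ : Cardinal.{0}) (l : Ordinal.{0}) (σ : Cardinal.{0}) (γ : Ordinal.{0})
    (J : Set (Set (Set Ordinal.{0}))) : Prop :=
  IsIdeal κ l J ∧ IsNormal κ l σ γ J

/-- `N` is the smallest `[γ]^{<σ}`-normal ideal on `P_κ(l)`. -/
def IsLeastNormalIdeal (κ : Cardinal.{0}) (l : Ordinal.{0}) (σ : Cardinal.{0}) (γ : Ordinal.{0})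
    (N : Set (Set (Set Ordinal.{0}))) : Prop :=
  IsNormalIdeal κ l σ γ N ∧ ∀ J, IsNormalIdeal κ l σ γ J → N ⊆ J

/-- `∇^δ K`, the ordinal-indexed diagonal union. -/
def nablaOrd (κ : Cardinal.{0}) (l : Ordinal.{0}) (δ : Ordinal.{0})
    (K : Set (Set (Set Ordinal.{0}))) : Set (Set (Set Ordinal.{0})) :=
  {B | ∃ F : Ordinal.{0} → Set (Set Ordinal.{0}),
    (∀ α < δ, F α ∈ K) ∧
    B ⊆ {a | a ∈ PSet κ l ∧ (0 : Ordinal) ∉ a} ∪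
      ⋃ α ∈ Set.Iio δ, {a | a ∈ F α ∧ α ∈ a}}

/-- `J` is `δ`-normal. -/
def IsOrdNormal (κ : Cardinal.{0}) (l : Ordinal.{0}) (δ : Ordinal.{0})
    (J : Set (Set (Set Ordinal.{0}))) : Prop :=
  J = nablaOrd κ l δ J

/-- `θ̄`: equals `θ` if `θ < κ`, or if `θ = κ` and `κ` is a limit cardinal;
equals `ν` if `θ = κ = ν⁺`. -/
noncomputable def thetaBar (κ θ : Cardinal.{0}) : Cardinal.{0} :=
  haveI := Classical.propDecidable (θ < κ ∨ Order.IsSuccLimit κ)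
  if θ < κ ∨ Order.IsSuccLimit κ then θ else sSup {ν | Order.succ ν = κ}

/-- `cof(K)`: the least number of generators of `K`. -/
noncomputable def cofIdeal (K : Set (Set (Set Ordinal.{0}))) : Cardinal.{1} :=
  sInf {c | ∃ S ⊆ K, #↥S = c ∧ ∀ B ∈ K, ∃ C ∈ S, B ⊆ C}

/-- The dominating number `𝔡^μ_{κ,l}`. -/
noncomputable def dNum (κ : Cardinal.{0}) (l : Ordinal.{0}) (μ : Cardinal.{1}) : Cardinal.{1} :=
  sInf {c | ∃ F : Set (μ.ord.ToType → Set Ordinal.{0}),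
    #↥F = c ∧ (∀ f ∈ F, ∀ i, f i ∈ PSet κ l) ∧
    ∀ g : μ.ord.ToType → Set Ordinal.{0}, (∀ i, g i ∈ PSet κ l) →
      ∃ f ∈ F, ∀ i, g i ⊆ f i}

/-- `u(ρ,μ)`: the least cardinality of a cofinal subset of `(P_ρ(μ), ⊆)`. -/
noncomputable def uNum (ρ μ : Cardinal.{0}) : Cardinal.{1} :=
  sInf {c | ∃ X ⊆ PSet ρ μ.ord, #↥X = c ∧ ∀ e ∈ PSet ρ μ.ord, ∃ x ∈ X, e ⊆ x}

/-- `cov(lam, ν, ν, 2)`: the least cardinality of an `X ⊆ P_ν(lam)` such that every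
member of `P_ν(lam)` is contained in a member of `X`. -/
noncomputable def covNum (lam ν : Cardinal.{0}) : Cardinal.{1} :=
  sInf {c | ∃ X ⊆ PSet ν lam.ord, #↥X = c ∧ ∀ e ∈ PSet ν lam.ord, ∃ x ∈ X, e ⊆ x}

/-- `C` is closed unbounded in `l`. -/
def IsClubIn (C : Set Ordinal.{0}) (l : Ordinal.{0}) : Prop :=
  C ⊆ Set.Iio l ∧ (∀ p < l, ∃ q ∈ C, p < q) ∧
    (∀ o < l, Order.IsSuccLimit o → (∀ p < o, ∃ q ∈ C, p < q ∧ q < o) → o ∈ C)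

/-- `κ` is a Mahlo cardinal: the set of regular cardinals below `κ` is stationary in `κ`. -/
def IsMahlo (κ : Cardinal.{0}) : Prop :=
  ∀ C : Set Ordinal.{0}, IsClubIn C κ.ord →
    ∃ o ∈ C, ∃ ρ : Cardinal.{0}, ρ.IsRegular ∧ ρ.ord = o

/-! ### Auxiliary machinery -/


/-- Transfinitely iterated closure under an operator `g`. -/
noncomputable def iterChain (g : Set Ordinal.{0} → Set Ordinal.{0}) (α : Ordinal.{0}) :
    Set Ordinal.{0} :=
  insert 0 (⋃ β : ↥(Set.Iio α), g (iterChain g β.1))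
termination_by α
decreasing_by exact β.2

lemma iterChain_def (g : Set Ordinal.{0} → Set Ordinal.{0}) (α : Ordinal.{0}) :
    iterChain g α = insert 0 (⋃ β : ↥(Set.Iio α), g (iterChain g β.1)) := by
  rw [iterChain]

lemma iterChain_mono (g : Set Ordinal.{0} → Set Ordinal.{0}) {α α' : Ordinal.{0}} (h : α ≤ α') :
    iterChain g α ⊆ iterChain g α' := by
  rw [iterChain_def, iterChain_def]
  apply insert_subset_insert
  exact iUnion_subset fun β => subset_iUnion_of_subset ⟨β.1, lt_of_lt_of_le β.2 h⟩ subset_rfl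

lemma step_subset (g : Set Ordinal.{0} → Set Ordinal.{0}) {β α : Ordinal.{0}} (h : β < α) :
    g (iterChain g β) ⊆ iterChain g α := by
  rw [iterChain_def g α]
  exact Set.Subset.trans
    (Set.subset_iUnion (fun β : ↥(Set.Iio α) => g (iterChain g β.1)) ⟨β, h⟩) (subset_insert _ _)

lemma zero_mem_iterChain (g : Set Ordinal.{0} → Set Ordinal.{0}) (α : Ordinal.{0}) :
    (0 : Ordinal) ∈ iterChain g α := by
  rw [iterChain_def]; exact mem_insert _ _

lemma mem_iterChain {g : Set Ordinal.{0} → Set Ordinal.{0}} {α : Ordinal.{0}} {x : Ordinal.{0}}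
    (hx : x ∈ iterChain g α) : x = 0 ∨ ∃ β, β < α ∧ x ∈ g (iterChain g β) := by
  rw [iterChain_def] at hx
  rcases hx with h | h
  · exact Or.inl h
  · simp only [mem_iUnion] at h
    obtain ⟨β, hβ⟩ := h
    exact Or.inr ⟨β.1, β.2, hβ⟩

lemma isRegular_lift {κ : Cardinal.{0}} (h : κ.IsRegular) :
    (Cardinal.lift.{1} κ).IsRegular := by
  constructor
  · simpa using h.1
  · rw [← Cardinal.lift_ord, ← Ordinal.lift_cof]
    exact (Cardinal.lift_le.mpr h.2).trans_eq rfl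

lemma iterChain_subset_Iio {g : Set Ordinal.{0} → Set Ordinal.{0}} {l : Ordinal.{0}}
    (h0 : (0 : Ordinal) < l) (hg : ∀ b, g b ⊆ Set.Iio l) (α : Ordinal.{0}) :
    iterChain g α ⊆ Set.Iio l := by
  rw [iterChain_def]
  exact insert_subset h0 (iUnion_subset fun β => hg _)

lemma iterChain_card {g : Set Ordinal.{0} → Set Ordinal.{0}} {κ ν : Cardinal.{0}}
    (hκ : κ.IsRegular) (hν : ν < κ)
    (hg : ∀ b : Set Ordinal.{0}, #↥b < Cardinal.lift.{1} κ → #↥(g b) < Cardinal.lift.{1} κ) :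
    ∀ α ≤ ν.ord, #↥(iterChain g α) < Cardinal.lift.{1} κ := by
  have hκℵ : ℵ₀ ≤ Cardinal.lift.{1} κ := by simpa using hκ.1
  intro α
  induction α using Ordinal.induction with
  | _ α IH =>
    intro hα
    rw [iterChain_def]
    have hidx : #↥(Set.Iio α) < Cardinal.lift.{1} κ := by
      rw [Ordinal.mk_Iio_ordinal]
      rw [Cardinal.lift_lt]
      calc α.card ≤ ν.ord.card := Ordinal.card_le_card hα
        _ = ν := Cardinal.card_ord ν
        _ < κ := hν
    have hunion : #↥(⋃ β : ↥(Set.Iio α), g (iterChain g β.1)) < Cardinal.lift.{1} κ := by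
      refine lt_of_le_of_lt (Cardinal.mk_iUnion_le _) ?_
      refine Cardinal.mul_lt_of_lt hκℵ hidx ?_
      refine Cardinal.iSup_lt_of_isRegular (isRegular_lift hκ) hidx ?_
      intro β
      exact hg _ (IH β.1 β.2 (le_of_lt (lt_of_lt_of_le β.2 hα)))
    calc #↥(insert 0 (⋃ β : ↥(Set.Iio α), g (iterChain g β.1)))
        ≤ #↥(⋃ β : ↥(Set.Iio α), g (iterChain g β.1)) + 1 := Cardinal.mk_insert_le
      _ < Cardinal.lift.{1} κ :=
          Cardinal.add_lt_of_lt hκℵ hunion (lt_of_lt_of_le one_lt_aleph0 hκℵ)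

lemma card_small_subsets {b : Set Ordinal.{0}} {θ μ : Cardinal.{0}}
    (hb : #↥b ≤ Cardinal.lift.{1} μ) :
    #↥{e : Set Ordinal.{0} | e ⊆ b ∧ #↥e < Cardinal.lift.{1} θ} ≤ #↥(PSet θ μ.ord) := by
  have hIio : #↥(Set.Iio μ.ord) = Cardinal.lift.{1} μ := by
    rw [Ordinal.mk_Iio_ordinal, Cardinal.card_ord]
  obtain ⟨j⟩ : Nonempty (↥b ↪ ↥(Set.Iio μ.ord)) := by
    rw [← Cardinal.le_def]; rw [hIio]; exact hb
  set Φ : ↥{e : Set Ordinal.{0} | e ⊆ b ∧ #↥e < Cardinal.lift.{1} θ} → ↥(PSet θ μ.ord) :=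
    fun e => ⟨Subtype.val '' (j '' (Subtype.val ⁻¹' e.1 : Set ↥b)), by
      constructor
      · rintro x ⟨y, _, rfl⟩; exact y.2
      · have h1 : #↥(Subtype.val '' (j '' (Subtype.val ⁻¹' e.1 : Set ↥b)))
            = #↥(Subtype.val ⁻¹' e.1 : Set ↥b) := by
          rw [Cardinal.mk_image_eq Subtype.val_injective, Cardinal.mk_image_eq j.injective]
        have h2 : #↥(Subtype.val ⁻¹' e.1 : Set ↥b) = #↥e.1 := by
          apply Cardinal.mk_preimage_of_injective_of_subset_range Subtype.val e.1
            Subtype.val_injective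
          rw [Subtype.range_coe]; exact e.2.1
        rw [h1, h2]; exact e.2.2⟩ with hΦ
  apply Cardinal.mk_le_of_injective (f := Φ)
  intro e₁ e₂ hee
  have key : ∀ (e₁ e₂ : ↥{e : Set Ordinal.{0} | e ⊆ b ∧ #↥e < Cardinal.lift.{1} θ}),
      Φ e₁ = Φ e₂ → e₁.1 ⊆ e₂.1 := by
    intro e₁ e₂ hee x hx
    have hxb : x ∈ b := e₁.2.1 hx
    have : (j ⟨x, hxb⟩ : Ordinal) ∈ Subtype.val '' (j '' (Subtype.val ⁻¹' e₁.1 : Set ↥b)) :=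
      ⟨j ⟨x, hxb⟩, ⟨⟨x, hxb⟩, hx, rfl⟩, rfl⟩
    rw [show (Subtype.val '' (j '' (Subtype.val ⁻¹' e₁.1 : Set ↥b)))
        = (Φ e₁).1 from rfl, hee] at this
    obtain ⟨z, ⟨y, hy, rfl⟩, hz⟩ := this
    have : y = ⟨x, hxb⟩ := j.injective (Subtype.val_injective hz)
    rw [this] at hy; exact hy
  exact Subtype.ext (Set.Subset.antisymm (key e₁ e₂ hee) (key e₂ e₁ hee.symm))

lemma bounded_of_card_lt {ν : Cardinal.{0}} (hν : ν.IsRegular) {S : Set Ordinal.{0}}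
    (hS : S ⊆ Set.Iio ν.ord) (hcard : #↥S < Cardinal.lift.{1} ν) :
    ∃ β, β < ν.ord ∧ ∀ x ∈ S, x ≤ β := by
  set o := ν.ord with ho
  let i := Ordinal.ToType.mk (o := o)
  set T : Set o.ToType := {y | (i.symm y : Ordinal) ∈ S} with hT
  have hinj : Function.Injective (fun y : ↥T => (⟨(i.symm y.1 : Ordinal), y.2⟩ : ↥S)) := by
    intro y z h
    have h2 := congrArg Subtype.val h
    exact Subtype.ext (i.symm.injective (Subtype.ext h2))
  have hTS : Cardinal.lift.{1} #↥T ≤ #↥S := by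
    have := Cardinal.lift_mk_le'.mpr ⟨⟨_, hinj⟩⟩
    simpa using this
  have hTlt : #↥T < ν := by
    rw [← Cardinal.lift_lt.{0,1}]
    exact lt_of_le_of_lt hTS hcard
  haveI hwo : IsWellOrder o.ToType (· < ·) := isWellOrder_lt
  have hb : Bounded (· < ·) T := by
    by_contra hnb
    have hcof : IsCofinal T := fun x => by
      by_contra hx; push_neg at hx; exact hnb ⟨x, hx⟩
    have := Order.cof_le hcof
    rw [Ordinal.cof_toType, hν.cof_eq] at this
    exact absurd hTlt (not_lt.mpr this)
  obtain ⟨a, haT⟩ := hb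
  refine ⟨(i.symm a : Ordinal), ((i.symm a)).2, fun x hx => ?_⟩
  have hxo : x < o := hS hx
  have hmem : i ⟨x, hxo⟩ ∈ T := by
    simp only [hT, mem_setOf_eq]
    rw [OrderIso.symm_apply_apply]
    exact hx
  have h2 : i ⟨x, hxo⟩ ≤ a := le_of_lt (haT _ hmem)
  have h3 : (⟨x, hxo⟩ : ↥(Set.Iio o)) ≤ i.symm a := by
    rw [← OrderIso.symm_apply_apply i ⟨x, hxo⟩]
    exact i.symm.monotone h2
  exact h3

lemma card_PSet_singular {θ : Cardinal.{0}} (hθ : ℵ₀ ≤ θ) (hsing : θ.ord.cof < θ) :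
    Cardinal.lift.{1} (θ ^ θ.ord.cof) ≤ #↥(PSet θ θ.ord) := by
  set c := θ.ord.cof with hc
  set A := ↥(Set.Iio c.ord) with hA
  set B := ↥(Set.Iio θ.ord) with hB
  have hAcard : #A = Cardinal.lift.{1} c := by
    rw [hA, Ordinal.mk_Iio_ordinal, Cardinal.card_ord]
  have hBcard : #B = Cardinal.lift.{1} θ := by
    rw [hB, Ordinal.mk_Iio_ordinal, Cardinal.card_ord]
  obtain ⟨j⟩ : Nonempty (A ↪ B) := by
    rw [← Cardinal.le_def, hAcard, hBcard]
    exact Cardinal.lift_le.mpr hsing.le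
  obtain ⟨pr⟩ : Nonempty (B × B ≃ B) := by
    rw [← Cardinal.eq, Cardinal.mk_prod, Cardinal.lift_id, hBcard,
      Cardinal.mul_eq_self (by simpa using hθ)]
  set Φ : (A → B) → ↥(PSet θ θ.ord) := fun f =>
    ⟨Subtype.val '' (Set.range fun i => pr (j i, f i)), by
      constructor
      · rintro x ⟨y, _, rfl⟩; exact y.2
      · calc #↥(Subtype.val '' (Set.range fun i => pr (j i, f i)))
            = #↥(Set.range fun i => pr (j i, f i)) :=
              Cardinal.mk_image_eq Subtype.val_injective
          _ ≤ #A := Cardinal.mk_range_le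
          _ = Cardinal.lift.{1} c := hAcard
          _ < Cardinal.lift.{1} θ := Cardinal.lift_lt.mpr hsing⟩ with hΦ
  have hinj : Function.Injective Φ := by
    intro f f' hff
    funext i
    have h1 : (pr (j i, f i) : Ordinal) ∈ (Φ f).1 := ⟨pr (j i, f i), ⟨i, rfl⟩, rfl⟩
    rw [hff] at h1
    obtain ⟨z, ⟨i', rfl⟩, hz⟩ := h1
    have h2 : pr (j i', f' i') = pr (j i, f i) := Subtype.val_injective hz
    have h3 : (j i', f' i') = (j i, f i) := pr.injective h2
    have h4 : i' = i := j.injective (congrArg Prod.fst h3)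
    have h5 := congrArg Prod.snd h3
    rw [h4] at h5
    exact h5.symm
  calc Cardinal.lift.{1} (θ ^ c) = Cardinal.lift.{1} θ ^ Cardinal.lift.{1} c :=
        Cardinal.lift_power θ c
    _ = #B ^ #A := by rw [hAcard, hBcard]
    _ = #(A → B) := Cardinal.power_def B A
    _ ≤ #↥(PSet θ θ.ord) := Cardinal.mk_le_of_injective hinj

lemma exists_nu {κ θ : Cardinal.{0}} (hθ2 : 2 ≤ θ) (hθω : θ * ℵ₀ < κ)
    (hP : ∀ μ : Cardinal.{0}, μ < κ → #↥(PSet θ μ.ord) < Cardinal.lift.{1} κ) :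
    ∃ ν : Cardinal.{0}, ν.IsRegular ∧ θ ≤ ν ∧ ν < κ := by
  have hω : ℵ₀ < κ := lt_of_le_of_lt (by
    calc ℵ₀ = 1 * ℵ₀ := (one_mul _).symm
      _ ≤ θ * ℵ₀ := by
        gcongr
        exact le_trans one_le_two hθ2) hθω
  have hθκ : θ < κ := lt_of_le_of_lt (by
    calc θ = θ * 1 := (mul_one _).symm
      _ ≤ θ * ℵ₀ := by gcongr; exact one_le_aleph0) hθω
  rcases le_or_gt θ ℵ₀ with hle | hlt
  · exact ⟨ℵ₀, Cardinal.isRegular_aleph0, hle, hω⟩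
  rcases (Order.succ_le_of_lt hθκ).lt_or_eq with hsucc | hsucc
  · exact ⟨Order.succ θ, Cardinal.isRegular_succ hlt.le, Order.le_succ θ, hsucc⟩
  rcases le_or_gt θ θ.ord.cof with hreg | hsing
  · exact ⟨θ, ⟨hlt.le, hreg⟩, le_rfl, hθκ⟩
  exfalso
  have hk : θ ^ θ.ord.cof < κ := by
    have h1 := card_PSet_singular hlt.le hsing
    have h2 := hP θ hθκ
    have := lt_of_le_of_lt h1 h2
    rwa [Cardinal.lift_lt] at this
  rw [← hsucc] at hk
  have h3 : θ ^ θ.ord.cof ≤ θ := Order.lt_succ_iff.mp hk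
  exact absurd (Cardinal.lt_power_cof hlt.le) (not_lt.mpr h3)


/-- Assume `θ·ℵ₀ < κ` and `|P_θ(μ)| < κ` for every cardinal `μ < κ`.
Then `P_κ(λ) ∉ ∇^{[λ]^{<θ}} I_{κ,λ}`. -/
theorem stmt9 (κ lam θ : Cardinal.{0})
    (hκ : κ.IsRegular) (hkl : κ ≤ lam) (hθ2 : 2 ≤ θ) (hθκ : θ ≤ κ)
    (hθω : θ * ℵ₀ < κ)
    (hP : ∀ μ : Cardinal.{0}, μ < κ → #↥(PSet θ μ.ord) < Cardinal.lift.{1} κ) :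
    PSet κ lam.ord ∉ nabla κ lam.ord θ lam.ord (Ikl κ lam.ord) := by
  intro hmem
  obtain ⟨F, hF, hcov⟩ := hmem
  -- witnesses for non-cofinality
  have hwit : ∀ e : Set Ordinal.{0}, ∃ c : Set Ordinal.{0},
      c ⊆ Set.Iio lam.ord ∧ #↥c < Cardinal.lift.{1} κ ∧
      (e ∈ PSet θ lam.ord → ∀ b ∈ F e, ¬ c ⊆ b) := by
    intro e
    by_cases he : e ∈ PSet θ lam.ord
    · obtain ⟨-, a, ha, hab⟩ := hF e he
      exact ⟨a, ha.1, ha.2, fun _ => hab⟩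
    · refine ⟨∅, empty_subset _, ?_, fun h' => absurd h' he⟩
      rw [Cardinal.mk_emptyCollection]
      exact lt_of_lt_of_le aleph0_pos (by simpa using hκ.1)
  choose w hw1 hw2 hw3 using hwit
  have hlam0 : (0 : Ordinal) < lam.ord := by
    rw [← Cardinal.ord_zero]
    exact Cardinal.ord_lt_ord.mpr (lt_of_lt_of_le aleph0_pos (hκ.1.trans hkl))
  -- the closure operator
  set g : Set Ordinal.{0} → Set Ordinal.{0} := fun b =>
    ⋃ e ∈ {e : Set Ordinal.{0} | e ⊆ b ∧ #↥e < Cardinal.lift.{1} θ}, insert 0 (w e) with hg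
  have hgIio : ∀ b, g b ⊆ Set.Iio lam.ord := by
    intro b
    exact iUnion₂_subset fun e he => insert_subset hlam0 (hw1 e)
  have hgcard : ∀ b : Set Ordinal.{0},
      #↥b < Cardinal.lift.{1} κ → #↥(g b) < Cardinal.lift.{1} κ := by
    intro b hb
    have hκℵ : ℵ₀ ≤ Cardinal.lift.{1} κ := by simpa using hκ.1
    obtain ⟨μ, hμκ, hμ⟩ := Cardinal.lt_lift_iff.mp hb
    have hS : #↥{e : Set Ordinal.{0} | e ⊆ b ∧ #↥e < Cardinal.lift.{1} θ}
        < Cardinal.lift.{1} κ :=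
      lt_of_le_of_lt (card_small_subsets (le_of_eq hμ.symm)) (hP μ hμκ)
    refine lt_of_le_of_lt (Cardinal.mk_biUnion_le _ _) ?_
    refine Cardinal.mul_lt_of_lt hκℵ hS ?_
    refine Cardinal.iSup_lt_of_isRegular (isRegular_lift hκ) hS ?_
    intro e
    calc #↥(insert 0 (w e.1)) ≤ #↥(w e.1) + 1 := Cardinal.mk_insert_le
      _ < Cardinal.lift.{1} κ :=
          Cardinal.add_lt_of_lt hκℵ (hw2 e.1) (lt_of_lt_of_le one_lt_aleph0 hκℵ)
  obtain ⟨ν, hν, hθν, hνκ⟩ := exists_nu hθ2 hθω hP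
  set a : Set Ordinal.{0} := iterChain g ν.ord with ha
  have haP : a ∈ PSet κ lam.ord :=
    ⟨iterChain_subset_Iio hlam0 hgIio ν.ord, iterChain_card hκ hνκ hgcard ν.ord le_rfl⟩
  have h0a : (0 : Ordinal) ∈ a := zero_mem_iterChain g ν.ord
  have hθ0 : (0 : Ordinal) < θ.ord := by
    rw [← Cardinal.ord_zero]
    exact Cardinal.ord_lt_ord.mpr (lt_of_lt_of_le two_pos hθ2)
  rcases hcov haP with hl | hr
  · exact absurd hl.2 (Set.nonempty_iff_ne_empty.mp ⟨0, h0a, hθ0⟩)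
  · simp only [mem_iUnion, exists_prop, mem_setOf_eq] at hr
    obtain ⟨e, heP, haF, hinP⟩ := hr
    have hea : e ⊆ a := fun x hx => (hinP.1 hx).1
    have hecard : #↥e < Cardinal.lift.{1} θ := heP.2
    have hν0 : (0 : Ordinal) < ν.ord := hν.ord_pos
    have hstage : ∀ x ∈ e, ∃ γ, γ < ν.ord ∧ x ∈ iterChain g γ := by
      intro x hx
      rcases mem_iterChain (hea hx) with rfl | ⟨β, hβ, hxg⟩
      · exact ⟨0, hν0, zero_mem_iterChain g 0⟩
      · exact ⟨Order.succ β, (Cardinal.isSuccLimit_ord hν.1).succ_lt hβ,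
          step_subset g (Order.lt_succ β) hxg⟩
    choose! st hst1 hst2 using hstage
    set S : Set Ordinal.{0} := (fun x : ↥e => st x.1) '' Set.univ with hSdef
    have hSsub : S ⊆ Set.Iio ν.ord := by
      rintro y ⟨x, -, rfl⟩; exact hst1 x.1 x.2
    have hScard : #↥S < Cardinal.lift.{1} ν := by
      refine lt_of_le_of_lt Cardinal.mk_image_le ?_
      rw [Cardinal.mk_univ]
      exact lt_of_lt_of_le hecard (Cardinal.lift_le.mpr hθν)
    obtain ⟨β, hβν, hβbd⟩ := bounded_of_card_lt hν hSsub hScard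
    have heβ : e ⊆ iterChain g β := by
      intro x hx
      have hxS : st x ∈ S := ⟨⟨x, hx⟩, mem_univ _, rfl⟩
      exact iterChain_mono g (hβbd _ hxS) (hst2 x hx)
    have hwa : insert 0 (w e) ⊆ a := by
      refine Set.Subset.trans ?_ (step_subset g hβν)
      exact subset_biUnion_of_mem (u := fun e => insert 0 (w e)) ⟨heβ, hecard⟩
    exact hw3 e heP a haF (Set.Subset.trans (subset_insert 0 (w e)) hwa)

end PklNormal
end

section
/- Assume δ ≥ κ and there exists a [δ]^{<θ}-normal ideal on P_κ(λ). Then there exists D ∈ (∇^δ I_{κ,λ})* such that NS^{[δ]^{<θ}}_{κ,λ} = NS^{[|δ|]^{<θ}}_{κ,λ} | D. -/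
open Cardinal Set

namespace PklNormal

section Aux

variable {κ lam θ : Cardinal.{0}} {l δ γ γ' : Ordinal.{0}}
variable {J K N : Set (Set (Set Ordinal.{0}))}

lemma aleph0_le_liftκ (hκ : ℵ₀ ≤ κ) : ℵ₀ ≤ Cardinal.lift.{1} κ :=
  Cardinal.aleph0_le_lift.mpr hκ

lemma finite_mem_PSet (hκ : ℵ₀ ≤ κ) {s : Set Ordinal} (hs : s.Finite) (h : s ⊆ Set.Iio l) :
    s ∈ PSet κ l :=
  ⟨h, hs.lt_aleph0.trans_le (aleph0_le_liftκ hκ)⟩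

lemma empty_mem_PSet (hκ : ℵ₀ ≤ κ) : (∅ : Set Ordinal) ∈ PSet κ l :=
  finite_mem_PSet hκ Set.finite_empty (Set.empty_subset _)

lemma empty_mem_Ikl (hκ : ℵ₀ ≤ κ) : (∅ : Set (Set Ordinal)) ∈ Ikl κ l :=
  ⟨Set.empty_subset _, ∅, empty_mem_PSet hκ, by simp⟩

lemma union_mem (hJ : IsIdeal κ l J) (hκ : ℵ₀ ≤ κ) {A B : Set (Set Ordinal)}
    (hA : A ∈ J) (hB : B ∈ J) : A ∪ B ∈ J := by
  have h1 : ({A, B} : Set (Set (Set Ordinal))) ⊆ J := by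
    intro x hx; rcases hx with rfl | rfl <;> assumption
  have h2 : #↥({A, B} : Set (Set (Set Ordinal))) < Cardinal.lift.{1} κ :=
    ((Set.finite_singleton B).insert A).lt_aleph0.trans_le (aleph0_le_liftκ hκ)
  have := hJ.sUnion_mem {A, B} h1 ⟨A, Or.inl rfl⟩ h2
  rwa [Set.sUnion_pair] at this

lemma empty_mem_ideal (hJ : IsIdeal κ l J) (hκ : ℵ₀ ≤ κ) : (∅ : Set (Set Ordinal)) ∈ J :=
  hJ.nonCofinal_subset (empty_mem_Ikl hκ)

lemma zero_lt_lift_theta (hθ2 : 2 ≤ θ) : (0 : Cardinal.{1}) < Cardinal.lift.{1} θ := by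
  have : (0 : Cardinal.{0}) < θ := lt_of_lt_of_le two_pos hθ2
  simpa using Cardinal.lift_lt.{0,1}.mpr this

lemma one_lt_lift_theta (hθ2 : 2 ≤ θ) : (1 : Cardinal.{1}) < Cardinal.lift.{1} θ := by
  have : (1 : Cardinal.{0}) < θ := lt_of_lt_of_le one_lt_two hθ2
  simpa using Cardinal.lift_lt.{0,1}.mpr this

lemma subset_nabla (hJ : IsIdeal κ l J) (hθ2 : 2 ≤ θ) : J ⊆ nabla κ l θ γ J := by
  intro B hB
  refine ⟨fun _ => B, fun e _ => hB, ?_⟩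
  intro a ha
  by_cases h0 : a ∩ Set.Iio θ.ord = ∅
  · exact Or.inl ⟨hJ.mem_subset B hB ha, h0⟩
  · refine Or.inr (Set.mem_iUnion₂.mpr ⟨∅, ⟨Set.empty_subset _, ?_⟩,
      ha, Set.empty_subset _, ?_⟩)
    · simpa using zero_lt_lift_theta hθ2
    · rw [Cardinal.mk_emptyCollection]
      rw [pos_iff_ne_zero, Cardinal.mk_ne_zero_iff]
      exact Set.nonempty_coe_sort.mpr (Set.nonempty_iff_ne_empty.mpr h0)

lemma nabla_mono (hemp : (∅ : Set (Set Ordinal)) ∈ J) (hγ : γ' ≤ γ) :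
    nabla κ l θ γ' J ⊆ nabla κ l θ γ J := by
  classical
  rintro B ⟨F, hF, hB⟩
  refine ⟨fun e => if e ∈ PSet θ γ' then F e else ∅, fun e _ => ?_, ?_⟩
  · dsimp only; split_ifs with h
    · exact hF e h
    · exact hemp
  · intro a ha
    rcases hB ha with h | h
    · exact Or.inl h
    · rw [Set.mem_iUnion₂] at h
      obtain ⟨e, he, hae, hsub, hlt⟩ := h
      refine Or.inr (Set.mem_iUnion₂.mpr ⟨e, ⟨he.1.trans (Set.Iio_subset_Iio hγ), he.2⟩,
        by dsimp only; rw [if_pos he]; exact hae,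
        hsub.trans (Set.inter_subset_inter_right _ (Set.Iio_subset_Iio hγ)), hlt⟩)

lemma nablaOrd_subset (hκ : κ.IsRegular) (hθ2 : 2 ≤ θ) (hl : (1 : Ordinal) < l)
    (hN : IsNormalIdeal κ l θ δ N) : nablaOrd κ l δ N ⊆ N := by
  classical
  obtain ⟨hNi, hNn⟩ := hN
  rintro B ⟨F, hF, hB⟩
  set X₀ : Set (Set Ordinal) := {a | a ∈ PSet κ l ∧ (0 : Ordinal) ∉ a} with hX₀def
  have hX₀J : X₀ ∈ N := by
    refine hNi.nonCofinal_subset ⟨fun a ha => ha.1, {0}, ?_, fun b hb hsub => hb.2 (hsub rfl)⟩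
    refine finite_mem_PSet hκ.aleph0_le (Set.finite_singleton _) ?_
    intro x hx; rw [Set.mem_singleton_iff] at hx; subst hx
    exact lt_of_le_of_lt (zero_le (a := (1 : Ordinal))) hl
  set A₁ : Set (Set Ordinal) := {a | a ∈ PSet κ l ∧ a ∩ Set.Iio θ.ord ⊆ {0}} with hA₁def
  have h1θ : (1 : Ordinal) < θ.ord := by
    rw [Cardinal.lt_ord, Ordinal.card_one]
    exact lt_of_lt_of_le one_lt_two hθ2
  have h0θ : (0 : Ordinal) < θ.ord := lt_of_le_of_lt (zero_le (a := (1 : Ordinal))) h1θ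
  have hA₁J : A₁ ∈ N := by
    refine hNi.nonCofinal_subset ⟨fun a ha => ha.1, {0, 1}, ?_, fun b hb hsub => ?_⟩
    · refine finite_mem_PSet hκ.aleph0_le (Set.toFinite _) ?_
      intro x hx; rcases hx with rfl | hx
      · exact lt_of_le_of_lt (zero_le (a := (1 : Ordinal))) hl
      · rw [Set.mem_singleton_iff] at hx; subst hx; exact hl
    · have h1b : (1 : Ordinal) ∈ b ∩ Set.Iio θ.ord := ⟨hsub (Or.inr rfl), h1θ⟩
      have := hb.2 h1b
      rw [Set.mem_singleton_iff] at this
      exact one_ne_zero this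
  have hkey : B \ (X₀ ∪ A₁) ∈ N := by
    rw [hNn]
    refine ⟨fun e => if h : ∃ α, α < δ ∧ e = {α} then F h.choose else ∅,
      fun e _ => ?_, ?_⟩
    · dsimp only; split_ifs with h
      · exact hF _ h.choose_spec.1
      · exact empty_mem_ideal hNi hκ.aleph0_le
    · rintro a ⟨haB, haX⟩
      rcases hB haB with h | h
      · exact absurd (Or.inl h) haX
      · rw [Set.mem_iUnion₂] at h
        obtain ⟨α, hαδ, haF, hαa⟩ := h
        have haP : a ∈ PSet κ l := hNi.mem_subset _ (hF α hαδ) haF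
        have h0a : (0 : Ordinal) ∈ a := by
          by_contra h0
          exact haX (Or.inl ⟨haP, h0⟩)
        have hnt : ¬ a ∩ Set.Iio θ.ord ⊆ {0} := fun hc => haX (Or.inr ⟨haP, hc⟩)
        obtain ⟨ξ, hξmem, hξ0⟩ := Set.not_subset.mp hnt
        have hex : ∃ α', α' < δ ∧ ({α} : Set Ordinal) = {α'} := ⟨α, hαδ, rfl⟩
        have hchoose : hex.choose = α :=
          (Set.singleton_eq_singleton_iff.mp hex.choose_spec.2).symm
        refine Or.inr (Set.mem_iUnion₂.mpr ⟨{α}, ⟨?_, ?_⟩, ?_, ?_, ?_⟩)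
        · intro x hx; rw [Set.mem_singleton_iff] at hx; subst hx; exact hαδ
        · rw [Cardinal.mk_singleton]; exact one_lt_lift_theta hθ2
        · dsimp only; rw [dif_pos hex, hchoose]; exact haF
        · intro x hx; rw [Set.mem_singleton_iff] at hx; subst hx; exact ⟨hαa, hαδ⟩
        · rw [Cardinal.mk_singleton, Cardinal.one_lt_iff_nontrivial,
            Set.nontrivial_coe_sort]
          exact ⟨0, ⟨h0a, h0θ⟩, ξ, hξmem, fun h => hξ0 (h ▸ rfl)⟩
  have hfin : B ⊆ (B \ (X₀ ∪ A₁)) ∪ X₀ ∪ A₁ := by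
    intro a ha
    by_cases h : a ∈ X₀ ∪ A₁
    · rcases h with h | h
      · exact Or.inl (Or.inr h)
      · exact Or.inr h
    · exact Or.inl (Or.inl ⟨ha, h⟩)
  exact hNi.subset_mem _ (union_mem hNi hκ.aleph0_le
    (union_mem hNi hκ.aleph0_le hkey hX₀J) hA₁J) B hfin

end Aux

/-- Assume `δ ≥ κ` and there exists a `[δ]^{<θ}`-normal ideal on `P_κ(λ)`.
Then there exists `D ∈ (∇^δ I_{κ,λ})*` such that
`NS^{[δ]^{<θ}}_{κ,λ} = NS^{[|δ|]^{<θ}}_{κ,λ} | D`. -/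
theorem stmt14 (κ lam θ : Cardinal.{0}) (δ : Ordinal.{0})
    (hκ : κ.IsRegular) (hkl : κ ≤ lam) (hθ2 : 2 ≤ θ) (hθκ : θ ≤ κ)
    (hδ1 : 1 ≤ δ) (hdl : δ ≤ lam.ord) (hκδ : κ.ord ≤ δ)
    (hex : ∃ J, IsNormalIdeal κ lam.ord θ δ J) :
    ∀ N₁ N₂, IsLeastNormalIdeal κ lam.ord θ δ N₁ →
      IsLeastNormalIdeal κ lam.ord θ δ.card.ord N₂ →
      ∃ D ∈ star κ lam.ord (nablaOrd κ lam.ord δ (Ikl κ lam.ord)),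
        N₁ = restrict κ lam.ord N₂ D := by
  classical
  intro N₁ N₂ h₁ h₂
  have hℵκ : ℵ₀ ≤ κ := hκ.aleph0_le
  have hl1 : (1 : Ordinal) < lam.ord := by
    rw [Cardinal.lt_ord, Ordinal.card_one]
    exact lt_of_lt_of_le Cardinal.one_lt_aleph0 (hℵκ.trans hkl)
  have hl0 : (0 : Ordinal) < lam.ord := lt_of_le_of_lt (zero_le (a := (1 : Ordinal))) hl1
  have hδc : δ.card.ord ≤ δ := Cardinal.ord_card_le δ
  obtain ⟨hI₁, hNn₁⟩ := h₁.1
  obtain ⟨hI₂, hNn₂⟩ := h₂.1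
  -- the bijection between Iio δ.card.ord and Iio δ
  have hcard : #(Set.Iio δ.card.ord) = #(Set.Iio δ) := by
    rw [Ordinal.mk_Iio_ordinal, Ordinal.mk_Iio_ordinal, Cardinal.card_ord]
  obtain ⟨f⟩ := Cardinal.eq.mp hcard
  set j : Ordinal → Ordinal :=
    fun β => if h : β < δ.card.ord then (f ⟨β, h⟩ : Ordinal) else 0 with hjdef
  set ji : Ordinal → Ordinal :=
    fun α => if h : α < δ then (f.symm ⟨α, h⟩ : Ordinal) else 0 with hjidef
  have hj_lt : ∀ β, β < δ.card.ord → j β < δ := by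
    intro β h
    have : j β = (f ⟨β, h⟩ : Ordinal) := dif_pos h
    rw [this]; exact (f ⟨β, h⟩).2
  have hji_lt : ∀ α, α < δ → ji α < δ.card.ord := by
    intro α h
    have : ji α = (f.symm ⟨α, h⟩ : Ordinal) := dif_pos h
    rw [this]; exact (f.symm ⟨α, h⟩).2
  have hj_ji : ∀ α, α < δ → j (ji α) = α := by
    intro α h
    have h1 : ji α = (f.symm ⟨α, h⟩ : Ordinal) := dif_pos h
    have h2 : ji α < δ.card.ord := hji_lt α h
    have h3 : j (ji α) = (f ⟨ji α, h2⟩ : Ordinal) := dif_pos h2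
    rw [h3]
    have h4 : (⟨ji α, h2⟩ : ↥(Set.Iio δ.card.ord)) = f.symm ⟨α, h⟩ := Subtype.ext h1
    rw [h4, Equiv.apply_symm_apply]
  -- the set D
  set D : Set (Set Ordinal) := {a | a ∈ PSet κ lam.ord ∧
    ∀ α ∈ a, (α < δ → ji α ∈ a) ∧ (α < δ.card.ord → j α ∈ a)} with hDdef
  have hD_sub : D ⊆ PSet κ lam.ord := fun a ha => ha.1
  -- the complement of D is small
  have hFIkl : ∀ α, α < δ →
      {a | a ∈ PSet κ lam.ord ∧ ((α < δ ∧ ji α ∉ a) ∨ (α < δ.card.ord ∧ j α ∉ a))}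
        ∈ Ikl κ lam.ord := by
    intro α hα
    refine ⟨fun a ha => ha.1, insert α (insert (j α) {ji α}), ?_, fun b hb hsub => ?_⟩
    · refine finite_mem_PSet hℵκ (Set.toFinite _) ?_
      intro x hx
      rcases hx with rfl | rfl | hx
      · exact lt_of_lt_of_le hα hdl
      · by_cases h : α < δ.card.ord
        · exact lt_of_lt_of_le (lt_of_lt_of_le (hj_lt α h) hdl) le_rfl
        · have : j α = 0 := dif_neg h
          rw [this]; exact hl0
      · rw [Set.mem_singleton_iff] at hx; subst hx
        exact lt_of_lt_of_le (lt_of_lt_of_le (hji_lt α hα) (hδc.trans hdl)) le_rfl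
    · rcases hb.2 with ⟨_, hji_nb⟩ | ⟨_, hj_nb⟩
      · exact hji_nb (hsub (Or.inr (Or.inr rfl)))
      · exact hj_nb (hsub (Or.inr (Or.inl rfl)))
  have hcompl : PSet κ lam.ord \ D ∈ nablaOrd κ lam.ord δ (Ikl κ lam.ord) := by
    refine ⟨fun α => {a | a ∈ PSet κ lam.ord ∧
      ((α < δ ∧ ji α ∉ a) ∨ (α < δ.card.ord ∧ j α ∉ a))}, hFIkl, ?_⟩
    rintro a ⟨haP, haD⟩
    have : ¬ ∀ α ∈ a, (α < δ → ji α ∈ a) ∧ (α < δ.card.ord → j α ∈ a) :=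
      fun h => haD ⟨haP, h⟩
    push_neg at this
    obtain ⟨α, hαa, hbad⟩ := this
    rcases Classical.em (α < δ ∧ ji α ∉ a) with h | h
    · exact Or.inr (Set.mem_iUnion₂.mpr ⟨α, h.1, ⟨haP, Or.inl h⟩, hαa⟩)
    · have h1 : α < δ → ji α ∈ a := fun hαδ => by
        by_contra hji; exact h ⟨hαδ, hji⟩
      have h2 : α < δ.card.ord ∧ j α ∉ a := hbad h1
      exact Or.inr (Set.mem_iUnion₂.mpr ⟨α, lt_of_lt_of_le h2.1 hδc,
        ⟨haP, Or.inr h2⟩, hαa⟩)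
  -- N₁ is also [|δ|]^{<θ}-normal
  have hempty₁ : (∅ : Set (Set Ordinal)) ∈ N₁ := empty_mem_ideal hI₁ hℵκ
  have h₁card : IsNormalIdeal κ lam.ord θ δ.card.ord N₁ := by
    refine ⟨hI₁, Set.Subset.antisymm (subset_nabla hI₁ hθ2) ?_⟩
    intro B hB
    rw [hNn₁]
    exact nabla_mono hempty₁ hδc hB
  have h21 : N₂ ⊆ N₁ := h₂.2 N₁ h₁card
  have hcomplN₁ : PSet κ lam.ord \ D ∈ N₁ := by
    refine nablaOrd_subset hκ hθ2 hl1 ⟨hI₁, hNn₁⟩ ?_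
    obtain ⟨F, hF, hB⟩ := hcompl
    exact ⟨F, fun α hα => hI₁.nonCofinal_subset (hF α hα), hB⟩
  have hDN₂ : D ∉ N₂ := by
    intro hD
    have hu := union_mem hI₁ hℵκ (h21 hD) hcomplN₁
    rw [Set.union_diff_cancel hD_sub] at hu
    exact hI₁.univ_not_mem hu
  -- K = restrict N₂ D is a [δ]^{<θ}-normal ideal
  set K : Set (Set (Set Ordinal)) := restrict κ lam.ord N₂ D with hKdef
  have hKmem : ∀ B, B ∈ K ↔ B ⊆ PSet κ lam.ord ∧ B ∩ D ∈ N₂ := fun B => Iff.rfl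
  have hKideal : IsIdeal κ lam.ord K := by
    constructor
    · intro B hB; exact ((hKmem B).mp hB).1
    · intro B hB C hCB
      obtain ⟨hB1, hB2⟩ := (hKmem B).mp hB
      exact (hKmem C).mpr ⟨hCB.trans hB1,
        hI₂.subset_mem _ hB2 _ (Set.inter_subset_inter_left D hCB)⟩
    · intro Y hY hne hcard'
      refine (hKmem _).mpr ⟨fun a ha => ?_, ?_⟩
      · obtain ⟨B, hBY, haB⟩ := ha
        exact ((hKmem B).mp (hY hBY)).1 haB
      · have heq : (⋃₀ Y) ∩ D = ⋃₀ ((fun B => B ∩ D) '' Y) := by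
          ext x
          simp only [Set.mem_inter_iff, Set.mem_sUnion, Set.mem_image]
          constructor
          · rintro ⟨⟨B, hB, hxB⟩, hxD⟩
            exact ⟨B ∩ D, ⟨B, hB, rfl⟩, hxB, hxD⟩
          · rintro ⟨_, ⟨B, hB, rfl⟩, hxB, hxD⟩
            exact ⟨⟨B, hB, hxB⟩, hxD⟩
        rw [heq]
        refine hI₂.sUnion_mem _ ?_ (hne.image _) ?_
        · rintro _ ⟨B, hBY, rfl⟩
          exact ((hKmem B).mp (hY hBY)).2
        · exact lt_of_le_of_lt Cardinal.mk_image_le hcard'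
    · intro B hB
      obtain ⟨hBP, a₀, ha₀, hwit⟩ := hB
      refine (hKmem B).mpr ⟨hBP, hI₂.nonCofinal_subset ?_⟩
      exact ⟨Set.inter_subset_left.trans hBP, a₀, ha₀, fun b hb => hwit b hb.1⟩
    · intro hP
      obtain ⟨-, hP2⟩ := (hKmem _).mp hP
      rw [Set.inter_eq_self_of_subset_right hD_sub] at hP2
      exact hDN₂ hP2
  have hKnormal : IsNormal κ lam.ord θ δ K := by
    refine Set.Subset.antisymm (subset_nabla hKideal hθ2) ?_
    rintro B ⟨F, hF, hB⟩
    have hFsub : ∀ e ∈ PSet θ δ, F e ⊆ PSet κ lam.ord :=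
      fun e he => ((hKmem (F e)).mp (hF e he)).1
    have hBsub : B ⊆ PSet κ lam.ord := by
      intro a ha
      rcases hB ha with h | h
      · exact h.1
      · rw [Set.mem_iUnion₂] at h
        obtain ⟨e, he, hae, _⟩ := h
        exact hFsub e he hae
    refine (hKmem B).mpr ⟨hBsub, ?_⟩
    rw [hNn₂]
    refine ⟨fun e' => F (j '' e') ∩ D, fun e' he' => ?_, ?_⟩
    · have hjP : j '' e' ∈ PSet θ δ := by
        refine ⟨?_, lt_of_le_of_lt Cardinal.mk_image_le he'.2⟩
        rintro _ ⟨x, hx, rfl⟩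
        exact hj_lt x (he'.1 hx)
      exact ((hKmem _).mp (hF _ hjP)).2
    · rintro a ⟨haB, haD⟩
      rcases hB haB with h | h
      · exact Or.inl h
      · rw [Set.mem_iUnion₂] at h
        obtain ⟨e, he, hae, hesub, helt⟩ := h
        have hinj : Set.InjOn ji e := by
          intro x hx y hy hxy
          rw [← hj_ji x (hesub hx).2, ← hj_ji y (hesub hy).2, hxy]
        have himg : j '' (ji '' e) = e := by
          ext x
          simp only [Set.mem_image]
          constructor
          · rintro ⟨y, ⟨z, hz, rfl⟩, rfl⟩
            rwa [hj_ji z (hesub hz).2]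
          · intro hx
            exact ⟨ji x, ⟨x, hx, rfl⟩, hj_ji x (hesub hx).2⟩
        refine Or.inr (Set.mem_iUnion₂.mpr ⟨ji '' e, ⟨?_, ?_⟩, ?_, ?_, ?_⟩)
        · rintro _ ⟨x, hx, rfl⟩
          exact hji_lt x (hesub hx).2
        · rw [Cardinal.mk_image_eq_of_injOn _ _ hinj]
          exact he.2
        · show a ∈ F (j '' (ji '' e)) ∩ D
          rw [himg]
          exact ⟨hae, haD⟩
        · rintro _ ⟨x, hx, rfl⟩
          exact ⟨(haD.2 x (hesub hx).1).1 (hesub hx).2, hji_lt x (hesub hx).2⟩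
        · rw [Cardinal.mk_image_eq_of_injOn _ _ hinj]
          exact helt
  have hN₁K : N₁ = K := by
    refine Set.Subset.antisymm (h₁.2 K ⟨hKideal, hKnormal⟩) ?_
    intro B hB
    obtain ⟨hB1, hB2⟩ := (hKmem B).mp hB
    have h1 : B ∩ D ∈ N₁ := h21 hB2
    have h2 : B \ D ∈ N₁ := hI₁.subset_mem _ hcomplN₁ _ (fun x hx => ⟨hB1 hx.1, hx.2⟩)
    have h3 := union_mem hI₁ hℵκ h1 h2
    rwa [Set.inter_union_diff] at h3
  exact ⟨D, ⟨hD_sub, hcompl⟩, hN₁K⟩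

end PklNormal
end
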